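/- If x ∈ {0,1} is sampled with P[x=1]=p and the same uniform random variable k ∈ [0,1] is used to sample x (x = 1 iff k ≤ p), then the expectation of s(x,k) equals 1 + ln(2)·H(p), where H(p) = -p·log₂(p) - (1-p)·log₂(1-p) is the binary entropy. -/

import Mathlib

open MeasureTheory

/-- The score `s(x,k)`: `ln(1/k)` if `x = 1` and `ln(1/(1-k))` if `x = 0`. -/
noncomputable def score (x : Bool) (k : ℝ) : ℝ :=
  if x then Real.log (1 / k) else Real.log (1 / (1 - k))

/-- Binary Shannon entropy in bits. -/
noncomputable def binEntropy (p : ℝ) : ℝ :=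
  -(p * Real.logb 2 p) - (1 - p) * Real.logb 2 (1 - p)

lemma logIntegrable {b : ℝ} (hb0 : 0 ≤ b) (hb1 : b ≤ 1) :
    IntervalIntegrable Real.log volume 0 b := by
  have hg : IntervalIntegrable (fun x : ℝ => 2 * x ^ (-(1/2) : ℝ)) volume 0 b :=
    (intervalIntegral.intervalIntegrable_rpow' (by norm_num)).const_mul 2
  refine hg.mono_fun Real.measurable_log.aestronglyMeasurable ?_
  rw [Set.uIoc_of_le hb0]
  filter_upwards [ae_restrict_mem measurableSet_Ioc] with x hx
  have hx0 : 0 < x := hx.1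
  have hx1 : x ≤ 1 := le_trans hx.2 hb1
  have hrp : (0:ℝ) < x ^ (-(1/2) : ℝ) := Real.rpow_pos_of_pos hx0 _
  have hlog : Real.log x ≤ 0 := Real.log_nonpos hx0.le hx1
  rw [Real.norm_eq_abs, Real.norm_eq_abs, abs_of_nonpos hlog,
    abs_of_nonneg (by positivity)]
  have h2 : Real.log (x ^ (-(1/2) : ℝ)) ≤ x ^ (-(1/2) : ℝ) - 1 :=
    Real.log_le_sub_one_of_pos hrp
  rw [Real.log_rpow hx0] at h2
  nlinarith

lemma integral_log_zero_left {b : ℝ} (hb0 : 0 ≤ b) (hb1 : b ≤ 1) :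
    ∫ x in (0:ℝ)..b, Real.log x = b * Real.log b - b := by
  rcases eq_or_lt_of_le hb0 with rfl | hb
  · simp
  set s : ℕ → Set ℝ := fun n => Set.Ioc (b / (n + 1)) b with hs
  have hmono : Monotone s := by
    intro n m hnm
    apply Set.Ioc_subset_Ioc_left
    apply div_le_div_of_nonneg_left hb.le (by positivity)
    have : (n:ℝ) ≤ m := Nat.cast_le.2 hnm
    push_cast; linarith
  have hunion : (⋃ n, s n) = Set.Ioc 0 b := by
    ext x
    simp only [hs, Set.mem_iUnion, Set.mem_Ioc]
    constructor
    · rintro ⟨n, h1, h2⟩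
      exact ⟨lt_trans (by positivity) h1, h2⟩
    · rintro ⟨h1, h2⟩
      obtain ⟨n, hn⟩ := exists_nat_gt (b / x)
      refine ⟨n, ?_, h2⟩
      rw [div_lt_iff₀ (by positivity)]
      have : b / x < n + 1 := lt_trans hn (by linarith)
      rw [div_lt_iff₀ h1] at this
      linarith
  have hint : IntegrableOn Real.log (⋃ n, s n) volume := by
    rw [hunion]
    exact (logIntegrable hb0 hb1).1
  have htend := tendsto_setIntegral_of_monotone (fun n => measurableSet_Ioc) hmono hint
  rw [hunion] at htend
  have hval : ∀ n : ℕ, ∫ x in s n, Real.log x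
      = b * Real.log b - b - ((b / (n+1)) * Real.log (b / (n+1)) - b / (n+1)) := by
    intro n
    have ha : (0:ℝ) < b / (n+1) := by positivity
    have hab : b / (n+1) ≤ b := by
      rw [div_le_iff₀ (by positivity)]; nlinarith [hb.le, (Nat.cast_nonneg n : (0:ℝ) ≤ n)]
    rw [hs, ← intervalIntegral.integral_of_le hab, integral_log]
    ring
  have htend2 : Filter.Tendsto (fun n : ℕ => ∫ x in s n, Real.log x) Filter.atTop
      (nhds (b * Real.log b - b)) := by
    simp_rw [hval]
    have h0 : Filter.Tendsto (fun n : ℕ => b / (n+1)) Filter.atTop (nhds 0) := by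
      have := (tendsto_const_div_atTop_nhds_zero_nat b).comp (Filter.tendsto_add_atTop_nat 1)
      unfold Function.comp at this
      convert this using 2 with n
      push_cast; ring
    have h1 : Filter.Tendsto (fun n : ℕ => (b / (n+1)) * Real.log (b / (n+1)))
        Filter.atTop (nhds 0) := by
      have := (Real.continuous_mul_log.tendsto 0).comp h0
      simpa [Function.comp_def] using this
    have := ((tendsto_const_nhds (x := b * Real.log b - b)).sub (h1.sub h0))
    simpa using this
  rw [intervalIntegral.integral_of_le hb0]
  exact tendsto_nhds_unique htend htend2


/-- If `x = 1` iff `k ≤ p` for `k` uniform on `[0,1]`, then the expectation of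
`s(x,k)` (with the same `k` used both to sample `x` and in the score) equals
`1 + ln 2 · H(p)`. -/
theorem expectation_score_correlated (p : ℝ) (hp : p ∈ Set.Icc (0 : ℝ) 1) :
    ∫ k in Set.Ioo (0 : ℝ) 1, score (decide (k ≤ p)) k
      = 1 + Real.log 2 * binEntropy p := by
  obtain ⟨hp0, hp1⟩ := hp
  have hq0 : (0:ℝ) ≤ 1 - p := by linarith
  have hq1 : (1:ℝ) - p ≤ 1 := by linarith
  have h1 : IntervalIntegrable (fun k => score (decide (k ≤ p)) k) volume 0 p := by
    refine ((logIntegrable hp0 hp1).neg).congr_ae ?_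
    rw [Set.uIoc_of_le hp0]
    filter_upwards [ae_restrict_mem measurableSet_Ioc] with k hk
    simp [score, hk.2, one_div, Real.log_inv]
  have hcomp : IntervalIntegrable (fun k : ℝ => Real.log (1 - k)) volume p 1 := by
    have := ((logIntegrable hq0 hq1).comp_sub_left 1).symm
    simpa using this
  have h2 : IntervalIntegrable (fun k => score (decide (k ≤ p)) k) volume p 1 := by
    refine hcomp.neg.congr_ae ?_
    rw [Set.uIoc_of_le hp1]
    filter_upwards [ae_restrict_mem measurableSet_Ioc] with k hk
    have hnk : ¬ (k ≤ p) := not_le.2 hk.1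
    simp [score, hnk, one_div, Real.log_inv]
  rw [← MeasureTheory.integral_Ioc_eq_integral_Ioo,
    ← intervalIntegral.integral_of_le zero_le_one,
    ← intervalIntegral.integral_add_adjacent_intervals h1 h2]
  have v1 : ∫ k in (0:ℝ)..p, score (decide (k ≤ p)) k = -(p * Real.log p - p) := by
    rw [← integral_log_zero_left hp0 hp1, ← intervalIntegral.integral_neg]
    refine intervalIntegral.integral_congr_ae (MeasureTheory.ae_of_all _ ?_)
    intro k hk
    rw [Set.uIoc_of_le hp0] at hk
    simp [score, hk.2, one_div, Real.log_inv]
  have v2 : ∫ k in (p:ℝ)..1, score (decide (k ≤ p)) k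
      = -((1-p) * Real.log (1-p) - (1-p)) := by
    have e1 : ∫ k in (p:ℝ)..1, score (decide (k ≤ p)) k
        = ∫ k in (p:ℝ)..1, -Real.log (1 - k) := by
      refine intervalIntegral.integral_congr_ae (MeasureTheory.ae_of_all _ ?_)
      intro k hk
      rw [Set.uIoc_of_le hp1] at hk
      have hnk : ¬ (k ≤ p) := not_le.2 hk.1
      simp [score, hnk, one_div, Real.log_inv]
    have e2 : ∫ k in (p:ℝ)..1, -Real.log (1 - k)
        = ∫ x in (0:ℝ)..(1-p), -Real.log x := by
      have := intervalIntegral.integral_comp_sub_left (a := p) (b := 1)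
        (fun x => -Real.log x) 1
      simpa using this
    rw [e1, e2, intervalIntegral.integral_neg, integral_log_zero_left hq0 hq1]
  rw [v1, v2]
  have hlog2 : Real.log 2 ≠ 0 := (Real.log_pos one_lt_two).ne'
  simp only [binEntropy, Real.logb]
  field_simp
  ring
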